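/- Let F and L be hyperbolic hyperfields and φ : F → L a multiring morphism. Then φ induces a morphism of graded rings φ* : K*F → K*L with φ₀ = id_ℤ and φₙ(ρ(a₁)...ρ(aₙ)) = ρ(φ(a₁))...ρ(φ(aₙ)); moreover (ψ∘φ)* = ψ*∘φ*, id* = id, and if φ is surjective then φ* is surjective in each degree. -/

import Mathlib

/-- A multiring structure (multivalued addition) on a carrier `R`. -/
structure MulRingOps (R : Type*) where
  add : R → R → Set R
  mul : R → R → R
  neg : R → R
  zero : R
  one : R

namespace MulRingOps

variable {R : Type*}

/-- The multiring axioms. -/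
structure IsMulRing (S : MulRingOps R) : Prop where
  add_nonempty : ∀ a b, (S.add a b).Nonempty
  add_comm : ∀ a b, S.add a b = S.add b a
  rev_left : ∀ {x y z}, z ∈ S.add x y → x ∈ S.add z (S.neg y)
  rev_right : ∀ {x y z}, z ∈ S.add x y → y ∈ S.add (S.neg x) z
  zero_add : ∀ x y, y ∈ S.add S.zero x ↔ x = y
  add_assoc : ∀ x y z : R,
    (⋃ w ∈ S.add y z, S.add x w) = (⋃ t ∈ S.add x y, S.add t z)
  mul_comm : ∀ a b, S.mul a b = S.mul b a
  mul_assoc : ∀ a b c, S.mul (S.mul a b) c = S.mul a (S.mul b c)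
  one_mul : ∀ a, S.mul S.one a = a
  mul_zero : ∀ a, S.mul a S.zero = S.zero
  distrib : ∀ {a b c : R} (d : R), c ∈ S.add a b →
    S.mul c d ∈ S.add (S.mul a d) (S.mul b d)

/-- A hyperfield: a multiring with `0 ≠ 1` in which every nonzero element is invertible. -/
structure IsHyperfield (S : MulRingOps R) extends IsMulRing S : Prop where
  zero_ne_one : S.zero ≠ S.one
  exists_inv : ∀ a, a ≠ S.zero → ∃ b, S.mul a b = S.one

/-- A hyperfield is hyperbolic when `1 - 1` is everything. -/
def IsHyperbolic (S : MulRingOps R) : Prop :=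
  S.add S.one (S.neg S.one) = Set.univ

/-- Morphisms of multirings. -/
def IsHom {A B : Type*} (S : MulRingOps A) (T : MulRingOps B) (f : A → B) : Prop :=
  (∀ {a b c}, c ∈ S.add a b → f c ∈ T.add (f a) (f b)) ∧
  (∀ a, f (S.neg a) = T.neg (f a)) ∧
  f S.zero = T.zero ∧
  (∀ a b, f (S.mul a b) = T.mul (f a) (f b)) ∧
  f S.one = T.one

end MulRingOps

namespace MulRingOps

variable {F : Type*}

open FreeAbelianGroup in
/-- The subgroup of relations defining `KₙF`: tuples with a zero entry are degenerate,
multilinearity in each slot, and the Steinberg-type relations `ρ(a)⊗ρ(b)` with `b ∈ 1-a`. -/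
def krel (S : MulRingOps F) (n : ℕ) : AddSubgroup (FreeAbelianGroup (Fin n → F)) :=
  AddSubgroup.closure
    ({x | ∃ v : Fin n → F, (∃ i, v i = S.zero) ∧ x = of v} ∪
     {x | ∃ (v : Fin n → F) (i : Fin n) (b c : F), b ≠ S.zero ∧ c ≠ S.zero ∧
        x = of (Function.update v i (S.mul b c)) - of (Function.update v i b) -
            of (Function.update v i c)} ∪
     {x | ∃ v : Fin n → F, (∀ j, v j ≠ S.zero) ∧
        (∃ i j : Fin n, i ≠ j ∧ v i ∈ S.add S.one (S.neg (v j))) ∧ x = of v})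

/-- `KₙF`: the n-th K-theory group of the hyperfield `F`, presented as the n-fold tensor
power of `K₁F = Ḟ` (written additively) modulo the Steinberg-type relations. -/
abbrev KGroup (S : MulRingOps F) (n : ℕ) :=
  FreeAbelianGroup (Fin n → F) ⧸ krel S n

/-- The generator `ρ(v 0)⋯ρ(v (n-1))` of `KₙF`. -/
def kgen (S : MulRingOps F) (n : ℕ) (v : Fin n → F) : KGroup S n :=
  QuotientAddGroup.mk (FreeAbelianGroup.of v)

end MulRingOps

namespace MulRingOps

open FreeAbelianGroup

variable {F L : Type*}

lemma hom_ne_zero {S : MulRingOps F} {T : MulRingOps L} (hS : S.IsHyperfield)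
    (hT : T.IsHyperfield) {φ : F → L} (hφ : IsHom S T φ) {a : F} (ha : a ≠ S.zero) :
    φ a ≠ T.zero := by
  obtain ⟨b, hb⟩ := hS.exists_inv a ha
  intro h
  have h1 : φ (S.mul a b) = T.mul (φ a) (φ b) := hφ.2.2.2.1 a b
  rw [hb, hφ.2.2.2.2, h] at h1
  exact hT.zero_ne_one (by rw [h1, hT.toIsMulRing.mul_comm, hT.toIsMulRing.mul_zero])

/-- The map on free abelian groups induced by `φ`. -/
def kmapF (φ : F → L) (n : ℕ) : FreeAbelianGroup (Fin n → F) →+ FreeAbelianGroup (Fin n → L) :=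
  FreeAbelianGroup.lift (fun v => of (φ ∘ v))

lemma kmapF_of (φ : F → L) (n : ℕ) (v : Fin n → F) :
    kmapF φ n (of v) = of (φ ∘ v) := lift_apply_of _ _

lemma krel_le {S : MulRingOps F} {T : MulRingOps L} (hS : S.IsHyperfield)
    (hT : T.IsHyperfield) {φ : F → L} (hφ : IsHom S T φ) (n : ℕ) :
    krel S n ≤ (krel T n).comap (kmapF φ n) := by
  rw [krel, AddSubgroup.closure_le]
  rintro x (⟨⟨v, ⟨i, hi⟩, rfl⟩ | ⟨v, i, b, c, hb, hc, rfl⟩⟩ | ⟨v, hv, ⟨i, j, hij, hmem⟩, rfl⟩) <;>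
    simp only [SetLike.mem_coe, AddSubgroup.mem_comap, map_sub, kmapF_of]
  · exact AddSubgroup.subset_closure (Or.inl (Or.inl
      ⟨φ ∘ v, ⟨i, by simp [Function.comp_apply, hi, hφ.2.2.1]⟩, rfl⟩))
  · refine AddSubgroup.subset_closure (Or.inl (Or.inr
      ⟨φ ∘ v, i, φ b, φ c, hom_ne_zero hS hT hφ hb, hom_ne_zero hS hT hφ hc, ?_⟩))
    rw [Function.comp_update, Function.comp_update, Function.comp_update, hφ.2.2.2.1]
  · refine AddSubgroup.subset_closure (Or.inr
      ⟨φ ∘ v, fun j => hom_ne_zero hS hT hφ (hv j), ⟨i, j, hij, ?_⟩, rfl⟩)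
    have := hφ.1 hmem
    rwa [hφ.2.2.2.2, hφ.2.1] at this

/-- The induced map on K-groups. -/
def kmap {S : MulRingOps F} {T : MulRingOps L} (hS : S.IsHyperfield)
    (hT : T.IsHyperfield) {φ : F → L} (hφ : IsHom S T φ) (n : ℕ) :
    KGroup S n →+ KGroup T n :=
  QuotientAddGroup.map _ _ (kmapF φ n) (krel_le hS hT hφ n)

lemma kmap_kgen {S : MulRingOps F} {T : MulRingOps L} (hS : S.IsHyperfield)
    (hT : T.IsHyperfield) {φ : F → L} (hφ : IsHom S T φ) (n : ℕ) (v : Fin n → F) :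
    kmap hS hT hφ n (kgen S n v) = kgen T n (φ ∘ v) := by
  show QuotientAddGroup.mk (kmapF φ n (of v)) = _
  rw [kmapF_of]; rfl

lemma kgroup_hom_ext {S : MulRingOps F} {n : ℕ} {G : Type*} [AddCommGroup G]
    (f g : KGroup S n →+ G) (h : ∀ v, f (kgen S n v) = g (kgen S n v)) :
    ∀ x, f x = g x := by
  intro x
  obtain ⟨y, rfl⟩ := QuotientAddGroup.mk_surjective x
  induction y using FreeAbelianGroup.induction_on with
  | zero => show f (QuotientAddGroup.mk 0) = g (QuotientAddGroup.mk 0); simp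
  | of v => exact h v
  | neg v ih =>
      show f (QuotientAddGroup.mk (-of v)) = g (QuotientAddGroup.mk (-of v))
      rw [QuotientAddGroup.mk_neg, map_neg, map_neg, ih]
  | add a b iha ihb =>
      show f (QuotientAddGroup.mk (a + b)) = g (QuotientAddGroup.mk (a + b))
      rw [QuotientAddGroup.mk_add, map_add, map_add, iha, ihb]

end MulRingOps

open MulRingOps in
/-- a morphism `φ : F → L` of hyperbolic hyperfields induces a morphism of
graded rings `φ* : K*F → K*L` with `φₙ(ρ(a₁)⋯ρ(aₙ)) = ρ(φ(a₁))⋯ρ(φ(aₙ))` (and `φ₀ = id`);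
moreover `(ψ∘φ)* = ψ*∘φ*`, `id* = id`, and `φ*` is degreewise surjective when `φ` is. -/
theorem ktheory_functorial {F L M : Type*}
    (S : MulRingOps F) (T : MulRingOps L) (U : MulRingOps M)
    (hS : S.IsHyperfield) (hT : T.IsHyperfield) (hU : U.IsHyperfield)
    (hSh : IsHyperbolic S) (hTh : IsHyperbolic T) (hUh : IsHyperbolic U)
    (φ : F → L) (ψ : L → M) (hφ : IsHom S T φ) (hψ : IsHom T U ψ) :
    -- existence and uniqueness of the induced graded map, defined on generators
    (∃! Φ : ∀ n, KGroup S n →+ KGroup T n,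
      ∀ (n : ℕ) (v : Fin n → F), Φ n (kgen S n v) = kgen T n (φ ∘ v)) ∧
    -- the induced maps form a morphism of graded rings: products of generators
    -- (concatenation) are preserved
    (∀ Φ : ∀ n, KGroup S n →+ KGroup T n,
      (∀ (n : ℕ) (v : Fin n → F), Φ n (kgen S n v) = kgen T n (φ ∘ v)) →
      ∀ (n m : ℕ) (v : Fin n → F) (w : Fin m → F),
        Φ (n + m) (kgen S (n + m) (Fin.append v w)) =
          kgen T (n + m) (Fin.append (φ ∘ v) (φ ∘ w))) ∧
    -- functoriality: (ψ ∘ φ)* = ψ* ∘ φ*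
    (∀ (Φ : ∀ n, KGroup S n →+ KGroup T n) (Ψ : ∀ n, KGroup T n →+ KGroup U n)
        (Θ : ∀ n, KGroup S n →+ KGroup U n),
      (∀ (n : ℕ) (v : Fin n → F), Φ n (kgen S n v) = kgen T n (φ ∘ v)) →
      (∀ (n : ℕ) (w : Fin n → L), Ψ n (kgen T n w) = kgen U n (ψ ∘ w)) →
      (∀ (n : ℕ) (v : Fin n → F), Θ n (kgen S n v) = kgen U n ((ψ ∘ φ) ∘ v)) →
      ∀ (n : ℕ) (x : KGroup S n), Θ n x = Ψ n (Φ n x)) ∧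
    -- id* = id
    (∀ Φ : ∀ n, KGroup S n →+ KGroup S n,
      (∀ (n : ℕ) (v : Fin n → F), Φ n (kgen S n v) = kgen S n (id ∘ v)) →
      ∀ (n : ℕ) (x : KGroup S n), Φ n x = x) ∧
    -- surjectivity
    (Function.Surjective φ →
      ∀ Φ : ∀ n, KGroup S n →+ KGroup T n,
        (∀ (n : ℕ) (v : Fin n → F), Φ n (kgen S n v) = kgen T n (φ ∘ v)) →
        ∀ n, Function.Surjective (Φ n)) := by
  refine ⟨⟨fun n => kmap hS hT hφ n, fun n v => kmap_kgen hS hT hφ n v, ?_⟩, ?_, ?_, ?_, ?_⟩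
  · -- uniqueness
    intro Ψ' hΨ'
    funext n
    exact AddMonoidHom.ext (kgroup_hom_ext (Ψ' n) (kmap hS hT hφ n)
      (fun v => by rw [hΨ' n v, kmap_kgen hS hT hφ n v]))
  · -- products of generators
    intro Φ hΦ n m v w
    rw [hΦ]
    congr 1
    funext i
    simp only [Function.comp_apply]
    exact i.addCases (fun i => by simp [Fin.append_left]) (fun i => by simp [Fin.append_right])
  · -- functoriality
    intro Φ Ψ Θ hΦ hΨ hΘ n x
    exact kgroup_hom_ext (Θ n) ((Ψ n).comp (Φ n))
      (fun v => by simp [hΘ, hΦ, hΨ, Function.comp_assoc]) x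
  · -- id
    intro Φ hΦ n x
    exact kgroup_hom_ext (Φ n) (AddMonoidHom.id _)
      (fun v => by simpa using hΦ n v) x
  · -- surjectivity
    intro hsurj Φ hΦ n x
    obtain ⟨y, rfl⟩ := QuotientAddGroup.mk_surjective x
    induction y using FreeAbelianGroup.induction_on with
    | zero => exact ⟨0, map_zero _⟩
    | of w =>
        refine ⟨kgen S n (fun i => (hsurj (w i)).choose), ?_⟩
        have hw : φ ∘ (fun i => (hsurj (w i)).choose) = w :=
          funext fun i => (hsurj (w i)).choose_spec
        rw [hΦ, hw]
        rfl
    | neg a ih =>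
        obtain ⟨z, hz⟩ := ih
        exact ⟨-z, by rw [map_neg, hz, ← QuotientAddGroup.mk_neg]⟩
    | add a b iha ihb =>
        obtain ⟨za, hza⟩ := iha
        obtain ⟨zb, hzb⟩ := ihb
        exact ⟨za + zb, by rw [map_add, hza, hzb, ← QuotientAddGroup.mk_add]⟩
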